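/- Let k be a field of characteristic p > 0. The polynomial Z^p − X^p·Y − X·Y^p generates a prime ideal in the polynomial ring k[X,Y,Z]; equivalently, Z^p − X^p·Y − X·Y^p is a prime element of k[X,Y,Z]. -/

import Mathlib

open MvPolynomial

section Aux

variable (k : Type*) [Field k]

/-- `X 1` is a prime element of `k[X₀,X₁]`. -/
lemma aux_prime_X_one : Prime (X 1 : MvPolynomial (Fin 2) k) := by
  let e := (renameEquiv k (Equiv.swap (0 : Fin 2) 1)).trans (MvPolynomial.finSuccEquiv k 1)
  rw [← MulEquiv.prime_iff e.toMulEquiv]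
  have h1 : e.toMulEquiv (X 1) = Polynomial.X := by
    show e (X 1) = Polynomial.X
    simp [e, MvPolynomial.finSuccEquiv_X_zero]
  rw [h1]
  exact Polynomial.prime_X

/-- `X 1` does not divide `X 0` in `k[X₀,X₁]`. -/
lemma aux_not_dvd : ¬ (X 1 : MvPolynomial (Fin 2) k) ∣ X 0 := by
  intro h
  have := map_dvd (aeval (fun j : Fin 2 => if j = 1 then (0 : k) else 1)) h
  simp only [AlgHom.toRingHom_eq_coe, RingHom.coe_coe, aeval_X, if_pos rfl,
    if_neg (by decide : (0 : Fin 2) ≠ 1)] at this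
  exact one_ne_zero (zero_dvd_iff.mp this)

/-- The key Eisenstein-type primality statement over `k[X₀,X₁]`. -/
lemma aux_prime_poly (p : ℕ) (hpp : p.Prime) :
    Prime (Polynomial.X ^ p -
      Polynomial.C ((X 1 : MvPolynomial (Fin 2) k) ^ p * X 0 + X 1 * X 0 ^ p)) := by
  set c : MvPolynomial (Fin 2) k := (X 1) ^ p * X 0 + X 1 * X 0 ^ p with hc
  set f : Polynomial (MvPolynomial (Fin 2) k) := Polynomial.X ^ p - Polynomial.C c with hf
  have hp0 : p ≠ 0 := hpp.ne_zero
  have hmonic : f.Monic := Polynomial.monic_X_pow_sub_C c hp0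
  have hdeg : f.natDegree = p := by
    rw [hf]; exact Polynomial.natDegree_X_pow_sub_C
  have hX1 : Prime (X 1 : MvPolynomial (Fin 2) k) := aux_prime_X_one k
  have hX1ne : (X 1 : MvPolynomial (Fin 2) k) ≠ 0 := hX1.ne_zero
  set P : Ideal (MvPolynomial (Fin 2) k) := Ideal.span {X 1} with hP
  have hPprime : P.IsPrime := (Ideal.span_singleton_prime hX1ne).mpr hX1
  have hdvd_c : (X 1 : MvPolynomial (Fin 2) k) ∣ c := by
    exact dvd_add (dvd_mul_of_dvd_left (dvd_pow_self _ hp0) _) (Dvd.intro _ rfl)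
  -- X1^2 does not divide c
  have hsq : ¬ (X 1 : MvPolynomial (Fin 2) k) ^ 2 ∣ c := by
    intro h
    have hcu : c = X 1 * ((X 1) ^ (p - 1) * X 0 + X 0 ^ p) := by
      rw [hc, mul_add, ← mul_assoc, ← pow_succ', Nat.sub_add_cancel hpp.one_lt.le]
    rw [hcu, sq] at h
    have hu : (X 1 : MvPolynomial (Fin 2) k) ∣ (X 1) ^ (p - 1) * X 0 + X 0 ^ p :=
      (mul_dvd_mul_iff_left hX1ne).mp h
    have h2p := hpp.two_le
    have h1 : (X 1 : MvPolynomial (Fin 2) k) ∣ (X 1) ^ (p - 1) * X 0 :=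
      dvd_mul_of_dvd_left (dvd_pow_self _ (by omega : p - 1 ≠ 0)) _
    have h2 : (X 1 : MvPolynomial (Fin 2) k) ∣ X 0 ^ p := (dvd_add_right h1).mp hu
    exact aux_not_dvd k (hX1.dvd_of_dvd_pow h2)
  have hE : f.IsEisensteinAt P := by
    constructor
    · rw [hmonic.leadingCoeff]
      intro h
      exact hPprime.ne_top (Ideal.eq_top_iff_one P |>.mpr h)
    · intro n hn
      rw [hdeg] at hn
      rw [hf, Polynomial.coeff_sub, Polynomial.coeff_X_pow, Polynomial.coeff_C,
        if_neg hn.ne]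
      rcases eq_or_ne n 0 with rfl | hn0
      · simpa [hP, Ideal.mem_span_singleton] using (dvd_neg.mpr hdvd_c)
      · simp [hn0]
    · rw [hf, Polynomial.coeff_sub, Polynomial.coeff_X_pow, Polynomial.coeff_C,
        if_neg (Ne.symm hp0), if_pos rfl, zero_sub, hP, Ideal.span_singleton_pow,
        Ideal.mem_span_singleton, dvd_neg]
      exact hsq
  have hirr : Irreducible f :=
    hE.irreducible hPprime hmonic.isPrimitive (by rw [hdeg]; exact hpp.pos)
  exact (UniqueFactorizationMonoid.irreducible_iff_prime).mp hirr

end Aux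

/-- Let `k` be a field of characteristic `p > 0`. The polynomial
`Z^p - X^p*Y - X*Y^p` is a prime element of the polynomial ring `k[X,Y,Z]`; equivalently,
it generates a prime ideal. -/
theorem prime_Zp_sub_XpY_sub_XYp
    (k : Type*) [Field k] (p : ℕ) (hp : 0 < p) [CharP k p] :
    Prime ((X 2 : MvPolynomial (Fin 3) k) ^ p
      - (X 0 : MvPolynomial (Fin 3) k) ^ p * X 1
      - X 0 * (X 1 : MvPolynomial (Fin 3) k) ^ p) := by
  have hpp : p.Prime := (CharP.char_is_prime_or_zero k p).resolve_right hp.ne'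
  let e := (renameEquiv k (Equiv.swap (0 : Fin 3) 2)).trans (MvPolynomial.finSuccEquiv k 2)
  rw [← MulEquiv.prime_iff e.toMulEquiv]
  have himg : e.toMulEquiv ((X 2 : MvPolynomial (Fin 3) k) ^ p - (X 0) ^ p * X 1
      - X 0 * (X 1) ^ p) =
      Polynomial.X ^ p -
        Polynomial.C ((X 1 : MvPolynomial (Fin 2) k) ^ p * X 0 + X 1 * X 0 ^ p) := by
    show e _ = _
    have h0 : e (X 0) = Polynomial.C (X 1) := by
      have hs : Equiv.swap (0 : Fin 3) 2 0 = Fin.succ 1 := by decide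
      simp only [e, AlgEquiv.trans_apply, renameEquiv_apply, rename_X, hs,
        MvPolynomial.finSuccEquiv_X_succ]
    have h1 : e (X 1) = Polynomial.C (X 0) := by
      have hs : Equiv.swap (0 : Fin 3) 2 1 = Fin.succ 0 := by decide
      simp only [e, AlgEquiv.trans_apply, renameEquiv_apply, rename_X, hs,
        MvPolynomial.finSuccEquiv_X_succ]
    have h2 : e (X 2) = Polynomial.X := by
      simp only [e, AlgEquiv.trans_apply, renameEquiv_apply, rename_X, Equiv.swap_apply_right]
      exact MvPolynomial.finSuccEquiv_X_zero
    rw [map_sub, map_sub, map_pow, map_mul, map_pow, map_mul, map_pow, h0, h1, h2]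
    rw [← Polynomial.C_pow, ← Polynomial.C_pow, ← Polynomial.C_mul, ← Polynomial.C_mul,
      sub_sub, ← Polynomial.C_add]
  rw [himg]
  exact aux_prime_poly k p hpp
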